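/- arXiv:1801.08386 — 4 statements merged into one kernel-verified Lean document; each statement's English description precedes it below -/
import Mathlib

section
/- Let ζ ∈ ℂ with Im ζ > 0. Define λ = (ζ + ζ^{-1})/2 and z = (ζ − ζ^{-1})/2. Then λ² = 1 + z², Im z > 0, and λ does not belong to the set (−∞, −1] ∪ [1, ∞) of real numbers of absolute value at least 1. -/
theorem stmt_1 (ζ : ℂ) (hζ : 0 < ζ.im) :
    ((ζ + ζ⁻¹) / 2) ^ 2 = 1 + ((ζ - ζ⁻¹) / 2) ^ 2 ∧
    0 < ((ζ - ζ⁻¹) / 2).im ∧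
    ¬ ∃ x : ℝ, (x ≤ -1 ∨ 1 ≤ x) ∧ (ζ + ζ⁻¹) / 2 = (x : ℂ) := by
  have hne : ζ ≠ 0 := by
    intro h; rw [h] at hζ; simp at hζ
  have hn : 0 < Complex.normSq ζ := Complex.normSq_pos.mpr hne
  refine ⟨by field_simp; ring, ?_, ?_⟩
  · have : ((ζ - ζ⁻¹) / 2).im = (ζ.im + ζ.im / Complex.normSq ζ) / 2 := by
      simp [Complex.div_im, Complex.sub_im, Complex.inv_im]
      ring
    rw [this]
    positivity
  · rintro ⟨x, hx, heq⟩
    have him : ((ζ + ζ⁻¹) / 2).im = 0 := by rw [heq]; simp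
    have him' : (ζ.im - ζ.im / Complex.normSq ζ) / 2 = 0 := by
      rw [← him]; simp [Complex.div_im, Complex.add_im, Complex.inv_im]; ring
    have hb : ζ.im ≠ 0 := ne_of_gt hζ
    have hn1 : Complex.normSq ζ = 1 := by
      have : ζ.im * (1 - 1 / Complex.normSq ζ) = 0 := by
        field_simp at him' ⊢; linarith
      rcases mul_eq_zero.mp this with h | h
      · exact absurd h hb
      · field_simp at h; linarith
    have hre : ((ζ + ζ⁻¹) / 2).re = ζ.re := by
      simp [Complex.div_re, Complex.add_re, Complex.inv_re, hn1]
    have hx2 : (x : ℂ).re = x := by simp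
    have hxa : x = ζ.re := by rw [← hre, heq, hx2]
    have hsq : ζ.re ^ 2 + ζ.im ^ 2 = 1 := by
      have := hn1; rw [Complex.normSq_apply] at this; nlinarith
    have h1 : ζ.re ^ 2 < 1 := by nlinarith
    have : -1 < ζ.re ∧ ζ.re < 1 := abs_lt.mp (by nlinarith [abs_nonneg ζ.re, sq_abs ζ.re] : |ζ.re| < 1)
    rcases hx with h | h <;> rw [hxa] at h <;> linarith [this.1, this.2]
end

section
/- Let λ, z, ζ ∈ ℂ with λ² = 1 + z² and ζ = λ + z, let q ∈ ℂ with |q|² ≠ ζ², and define for μ ∈ ℂ the 2×2 complex matrix M(μ) with first row (−iμ, q) and second row (q̄, iμ). Then (|q|² − ζ²)^{-1} · [ M(ζ)·M(λ) − (|q|² − 1)·I ] · M(ζ) equals the diagonal matrix diag(−iz, iz). -/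
open Matrix in
theorem stmt_3 (lam z ζ q : ℂ) (h1 : lam ^ 2 = 1 + z ^ 2) (h2 : ζ = lam + z)
    (hq : (Complex.normSq q : ℂ) ≠ ζ ^ 2)
    (M : ℂ → Matrix (Fin 2) (Fin 2) ℂ)
    (hM : ∀ μ : ℂ, M μ = !![-(Complex.I * μ), q; (starRingEnd ℂ) q, Complex.I * μ]) :
    ((Complex.normSq q : ℂ) - ζ ^ 2)⁻¹ •
        (M ζ * M lam - ((Complex.normSq q : ℂ) - 1) • (1 : Matrix (Fin 2) (Fin 2) ℂ)) * M ζ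
      = !![-(Complex.I * z), 0; 0, Complex.I * z] := by
  have hd0 : (Complex.normSq q : ℂ) - ζ ^ 2 ≠ 0 := sub_ne_zero.mpr hq
  have key : (M ζ * M lam - ((Complex.normSq q : ℂ) - 1) • (1 : Matrix (Fin 2) (Fin 2) ℂ)) * M ζ
      = ((Complex.normSq q : ℂ) - ζ ^ 2) • !![-(Complex.I * z), 0; 0, Complex.I * z] := by
    have hn : (Complex.normSq q : ℂ) = (starRingEnd ℂ) q * q := by
      rw [Complex.normSq_eq_conj_mul_self]
    have hI : Complex.I ^ 2 = -1 := Complex.I_sq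
    subst h2
    ext i j
    fin_cases i <;> fin_cases j <;>
      simp [hM, Matrix.mul_apply, Fin.sum_univ_two, Matrix.one_apply, hn, Matrix.smul_apply]
    · linear_combination (Complex.I * (lam + z)) * h1
        - Complex.I * (lam * z ^ 2 + 2 * lam ^ 2 * z + lam ^ 3) * hI
    · linear_combination (-q) * h1 + (lam ^ 2 * q - z ^ 2 * q) * hI
    · linear_combination (-(starRingEnd ℂ) q) * h1
        + ((starRingEnd ℂ) q * lam ^ 2 - (starRingEnd ℂ) q * z ^ 2) * hI
    · linear_combination (-(Complex.I * (lam + z))) * h1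
        + Complex.I * (lam * z ^ 2 + 2 * lam ^ 2 * z + lam ^ 3) * hI
  rw [Matrix.smul_mul, key, smul_smul, inv_mul_cancel₀ hd0, one_smul]
end

section
/- Let w₀ ∈ L²(ℝ; ℝ) be locally integrable and let w : ℝ → ℝ be differentiable with w'(x) = (2 − 2 w₀(x)) w(x) for all x. If w ∈ L²(ℝ) then w is identically zero. -/
open MeasureTheory intervalIntegral Set

lemma stmt9_aux (w₀ w : ℝ → ℝ)
    (hw₀ : MeasureTheory.MemLp w₀ 2 MeasureTheory.volume)
    (hw₀loc : MeasureTheory.LocallyIntegrable w₀ MeasureTheory.volume)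
    (hderiv : ∀ x, HasDerivAt w ((2 - 2 * w₀ x) * w x) x)
    (hw : MeasureTheory.MemLp w 2 MeasureTheory.volume)
    (x₀ : ℝ) (hx₀ : 0 < w x₀) : False := by
  have hwcont : Continuous w := by
    rw [continuous_iff_continuousAt]; exact fun x => (hderiv x).continuousAt
  have hw₀sq : Integrable (fun x => (w₀ x) ^ 2) volume := hw₀.integrable_sq
  set K := ∫ x, (w₀ x) ^ 2 with hKdef
  have hK : 0 ≤ K := integral_nonneg fun x => sq_nonneg _
  set c := w x₀ * Real.exp (-(1 + 2 * K)) with hcdef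
  have hc : 0 < c := mul_pos hx₀ (Real.exp_pos _)
  have hclt : c < w x₀ := by
    have : Real.exp (-(1 + 2 * K)) < 1 := by
      rw [Real.exp_lt_one_iff]; linarith
    calc c < w x₀ * 1 := by exact (mul_lt_mul_iff_right₀ hx₀).2 this
    _ = w x₀ := mul_one _
  -- Step A: the log formula giving a lower bound
  have stepA : ∀ m, x₀ ≤ m → (∀ t ∈ Icc x₀ m, 0 < w t) → c < w m := by
    intro m hm hpos
    have hint₀ : IntervalIntegrable w₀ volume x₀ m := by
      rw [intervalIntegrable_iff_integrableOn_Ioc_of_le hm]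
      exact (hw₀loc.integrableOn_isCompact isCompact_Icc).mono_set Ioc_subset_Icc_self
    have hint : IntervalIntegrable (fun t => 2 - 2 * w₀ t) volume x₀ m := by
      apply IntervalIntegrable.sub intervalIntegrable_const
      exact hint₀.const_mul 2
    have hftc : ∫ t in x₀..m, (2 - 2 * w₀ t) =
        Real.log (w m) - Real.log (w x₀) := by
      apply intervalIntegral.integral_eq_sub_of_hasDerivAt _ hint
      intro t ht
      rw [uIcc_of_le hm] at ht
      have hwt : w t ≠ 0 := ne_of_gt (hpos t ht)
      have := (hderiv t).log hwt
      have heq : (2 - 2 * w₀ t) * w t / w t = 2 - 2 * w₀ t := by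
        field_simp
      rwa [heq] at this
    -- bound ∫ w₀
    have hintsq : IntervalIntegrable (fun t => (w₀ t) ^ 2 + 1/4) volume x₀ m :=
      (hw₀sq.intervalIntegrable).add intervalIntegrable_const
    have hbound1 : ∫ t in x₀..m, w₀ t ≤ ∫ t in x₀..m, ((w₀ t) ^ 2 + 1/4) := by
      apply intervalIntegral.integral_mono_on hm hint₀ hintsq
      intro t _
      nlinarith [sq_nonneg (w₀ t - 1/2)]
    have hbound2 : ∫ t in x₀..m, (w₀ t) ^ 2 ≤ K := by
      rw [intervalIntegral.integral_of_le hm]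
      calc ∫ t in Ioc x₀ m, (w₀ t) ^ 2 ≤ ∫ t, (w₀ t) ^ 2 :=
        setIntegral_le_integral hw₀sq (Filter.Eventually.of_forall fun t => sq_nonneg _)
      _ = K := rfl
    have hsplit : ∫ t in x₀..m, ((w₀ t) ^ 2 + 1/4) =
        (∫ t in x₀..m, (w₀ t) ^ 2) + (m - x₀) * (1/4) := by
      rw [intervalIntegral.integral_add hw₀sq.intervalIntegrable intervalIntegrable_const,
        intervalIntegral.integral_const, smul_eq_mul]
    have hsplit2 : ∫ t in x₀..m, (2 - 2 * w₀ t) =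
        2 * (m - x₀) - 2 * ∫ t in x₀..m, w₀ t := by
      rw [intervalIntegral.integral_sub intervalIntegrable_const (hint₀.const_mul 2),
        intervalIntegral.integral_const, intervalIntegral.integral_const_mul, smul_eq_mul,
        mul_comm]
    have hlow : Real.log (w x₀) - 2 * K ≤ Real.log (w m) := by
      have h1 : ∫ t in x₀..m, w₀ t ≤ K + (m - x₀) * (1/4) := by
        calc ∫ t in x₀..m, w₀ t ≤ ∫ t in x₀..m, ((w₀ t) ^ 2 + 1/4) := hbound1
        _ = (∫ t in x₀..m, (w₀ t) ^ 2) + (m - x₀) * (1/4) := hsplit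
        _ ≤ K + (m - x₀) * (1/4) := by linarith
      have h2 : -2*K ≤ ∫ t in x₀..m, (2 - 2 * w₀ t) := by
        rw [hsplit2]; nlinarith
      rw [hftc] at h2; linarith
    have : w x₀ * Real.exp (-(2*K)) ≤ w m := by
      have h := Real.exp_le_exp.2 hlow
      rw [Real.exp_sub, Real.exp_log hx₀, Real.exp_log (hpos m ⟨hm, le_refl m⟩),
        div_le_iff₀ (Real.exp_pos _)] at h
      calc w x₀ * Real.exp (-(2*K)) ≤ (w m * Real.exp (2*K)) * Real.exp (-(2*K)) :=
        mul_le_mul_of_nonneg_right h (le_of_lt (Real.exp_pos _))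
      _ = w m := by rw [mul_assoc, ← Real.exp_add]; simp
    have hexplt : Real.exp (-(1 + 2*K)) < Real.exp (-(2*K)) := by
      rw [Real.exp_lt_exp]; linarith
    calc c = w x₀ * Real.exp (-(1 + 2*K)) := rfl
    _ < w x₀ * Real.exp (-(2*K)) := (mul_lt_mul_iff_right₀ hx₀).2 hexplt
    _ ≤ w m := this
  -- Step B: w x ≥ c for all x ≥ x₀
  have stepB : ∀ x, x₀ ≤ x → c ≤ w x := by
    intro x₁ hx₁
    by_contra hlt
    push_neg at hlt
    -- IVT: there is a point where w = c
    have hIVT : ∃ z ∈ Icc x₀ x₁, w z = c := by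
      have : c ∈ Icc (w x₁) (w x₀) := ⟨le_of_lt hlt, le_of_lt hclt⟩
      exact intermediate_value_Icc' hx₁ (hwcont.continuousOn) this
    obtain ⟨z, hz, hwz⟩ := hIVT
    -- take the infimum of such points
    set S := {t : ℝ | t ∈ Icc x₀ x₁ ∧ w t = c} with hSdef
    have hSne : S.Nonempty := ⟨z, hz, hwz⟩
    have hSbdd : BddBelow S := ⟨x₀, fun t ht => ht.1.1⟩
    have hSclosed : IsClosed S :=
      (isClosed_Icc.inter (isClosed_eq hwcont continuous_const) : IsClosed (Icc x₀ x₁ ∩ {t | w t = c}))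
    set m := sInf S with hmdef
    have hmS : m ∈ S := hSclosed.csInf_mem hSne hSbdd
    have hmx₀ : x₀ ≤ m := hmS.1.1
    have hwm : w m = c := hmS.2
    have hpos : ∀ t ∈ Icc x₀ m, 0 < w t := by
      intro t ht
      rcases eq_or_lt_of_le ht.2 with h | h
      · rw [h, hwm]; exact hc
      -- t < m : show w t > c
      by_contra hnpos
      push_neg at hnpos
      -- w t ≤ 0 < c, w x₀ > c; IVT on [x₀, t] gives earlier point with w = c
      have : ∃ z' ∈ Icc x₀ t, w z' = c := by
        have hmem : c ∈ Icc (w t) (w x₀) := ⟨le_trans hnpos (le_of_lt hc), le_of_lt hclt⟩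
        have := intermediate_value_Icc' ht.1 (hwcont.continuousOn) hmem
        exact this
      obtain ⟨z', hz', hwz'⟩ := this
      have hz'S : z' ∈ S := ⟨⟨hz'.1, le_trans hz'.2 (le_trans (le_of_lt h) hmS.1.2)⟩, hwz'⟩
      have : m ≤ z' := csInf_le hSbdd hz'S
      linarith [hz'.2]
    have := stepA m hmx₀ hpos
    rw [hwm] at this
    exact lt_irrefl c this
  -- Step C: contradiction with L²
  have hwsq : Integrable (fun x => (w x) ^ 2) volume := hw.integrable_sq
  have hfin := hwsq.measure_ge_lt_top (by positivity : (0:ℝ) < c ^ 2)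
  have hsub : Ici x₀ ⊆ {x | c ^ 2 ≤ w x ^ 2} := by
    intro x hx
    have := stepB x hx
    have : c ^ 2 ≤ w x ^ 2 := by nlinarith
    exact this
  have hle : volume (Ici x₀) ≤ volume {x | c ^ 2 ≤ w x ^ 2} :=
    measure_mono hsub
  rw [Real.volume_Ici] at hle
  exact absurd (lt_of_le_of_lt hle hfin) (by simp)

theorem stmt_9 (w₀ w : ℝ → ℝ)
    (hw₀ : MeasureTheory.MemLp w₀ 2 MeasureTheory.volume)
    (hw₀loc : MeasureTheory.LocallyIntegrable w₀ MeasureTheory.volume)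
    (hderiv : ∀ x, HasDerivAt w ((2 - 2 * w₀ x) * w x) x)
    (hw : MeasureTheory.MemLp w 2 MeasureTheory.volume) :
    ∀ x, w x = 0 := by
  intro x
  by_contra hne
  rcases lt_or_gt_of_ne hne with hneg | hpos
  · have hderiv' : ∀ y, HasDerivAt (fun t => -w t) ((2 - 2 * w₀ y) * (-w y)) y := by
      intro y
      have := (hderiv y).fun_neg
      rw [show (2 - 2 * w₀ y) * (-w y) = -((2 - 2 * w₀ y) * w y) by ring]; exact this
    exact stmt9_aux w₀ (fun t => -w t) hw₀ hw₀loc hderiv' hw.neg x (by simpa using hneg)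
  · exact stmt9_aux w₀ w hw₀ hw₀loc hderiv hw x hpos
end

section
/- Let z ∈ ℂ with Im z > 0 and let g, h : ℝ → ℂ be Schwartz functions. Then ∫∫_{x<y} e^{2iz(y−x)} g(y) h(x) dx dy = (i/(2z)) · ( ∫_ℝ g(x) h(x) dx − ∫∫_{x<y} e^{2iz(y−x)} g(y) h'(x) dx dy ). -/
open MeasureTheory Set Filter Complex SchwartzMap Topology

lemma re_calc (z : ℂ) (r : ℝ) : (2 * Complex.I * z * (r : ℂ)).re = -2 * z.im * r := by
  simp [Complex.mul_re, Complex.mul_im]; try ring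

lemma exp_norm (z : ℂ) (r : ℝ) :
    ‖Complex.exp (2 * Complex.I * z * (r : ℂ))‖ = Real.exp (-2 * z.im * r) := by
  rw [Complex.norm_exp, re_calc]

lemma exp_norm_le_one (z : ℂ) (hz : 0 < z.im) (r : ℝ) (hr : 0 ≤ r) :
    ‖Complex.exp (2 * Complex.I * z * (r : ℂ))‖ ≤ 1 := by
  rw [exp_norm]; apply Real.exp_le_one_iff.mpr; nlinarith

noncomputable def FF (z : ℂ) (u v : SchwartzMap ℝ ℂ) : ℝ × ℝ → ℂ :=
  fun p => Complex.exp (2 * Complex.I * z * ((p.2 : ℂ) - (p.1 : ℂ))) * u p.2 * v p.1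

lemma hs_meas : MeasurableSet {p : ℝ × ℝ | p.1 < p.2} :=
  measurableSet_lt measurable_fst measurable_snd

lemma FF_cont (z : ℂ) (u v : SchwartzMap ℝ ℂ) : Continuous (FF z u v) := by
  unfold FF
  apply Continuous.mul
  apply Continuous.mul
  · exact Complex.continuous_exp.comp (by fun_prop)
  · exact u.continuous.comp continuous_snd
  · exact v.continuous.comp continuous_fst

lemma FF_intOn (z : ℂ) (hz : 0 < z.im) (u v : SchwartzMap ℝ ℂ) :
    IntegrableOn (FF z u v) {p : ℝ × ℝ | p.1 < p.2} := by
  have hbd : Integrable (fun p : ℝ × ℝ => ‖v p.1‖ * ‖u p.2‖)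
      (volume.restrict {p : ℝ × ℝ | p.1 < p.2}) := by
    apply Integrable.restrict
    rw [MeasureTheory.Measure.volume_eq_prod]
    exact (v.integrable.norm).mul_prod (u.integrable.norm)
  apply Integrable.mono' hbd ((FF_cont z u v).aestronglyMeasurable.restrict)
  rw [ae_restrict_iff' hs_meas]
  apply ae_of_all
  intro p hp
  simp only [Set.mem_setOf_eq] at hp
  unfold FF
  rw [norm_mul, norm_mul]
  have h1 : ((p.2 : ℂ) - (p.1 : ℂ)) = ((p.2 - p.1 : ℝ) : ℂ) := by push_cast; ring
  rw [h1]
  have h2 := exp_norm_le_one z hz (p.2 - p.1) (by linarith)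
  have := norm_nonneg (u p.2); have := norm_nonneg (v p.1)
  calc ‖Complex.exp _‖ * ‖u p.2‖ * ‖v p.1‖ ≤ 1 * ‖u p.2‖ * ‖v p.1‖ := by
        apply mul_le_mul_of_nonneg_right (mul_le_mul_of_nonneg_right h2 ‹_›) ‹_›
    _ = ‖v p.1‖ * ‖u p.2‖ := by ring

lemma inner_point (z : ℂ) (u v : SchwartzMap ℝ ℂ) (y : ℝ) :
    (∫ x, Set.indicator {p : ℝ × ℝ | p.1 < p.2} (FF z u v) (x, y)) =
      u y * ∫ x : ℝ in Iio y, Complex.exp (2 * Complex.I * z * ((y : ℂ) - (x : ℂ))) * v x := by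
  have h1 : (fun x => Set.indicator {p : ℝ × ℝ | p.1 < p.2} (FF z u v) (x, y)) =
      Set.indicator (Iio y) (fun x => FF z u v (x, y)) := by
    funext x
    by_cases hx : x < y <;> simp [Set.indicator, hx, Set.mem_setOf_eq, Set.mem_Iio]
  rw [h1, integral_indicator measurableSet_Iio]
  have h2 : (fun x : ℝ => FF z u v (x, y)) =
      fun x : ℝ => u y * (Complex.exp (2 * Complex.I * z * ((y : ℂ) - (x : ℂ))) * v x) := by
    funext x; unfold FF; ring
  rw [h2, integral_const_mul]

lemma FF_ind_int (z : ℂ) (hz : 0 < z.im) (u v : SchwartzMap ℝ ℂ) :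
    Integrable (Set.indicator {p : ℝ × ℝ | p.1 < p.2} (FF z u v))
      ((volume : Measure ℝ).prod volume) := by
  rw [← MeasureTheory.Measure.volume_eq_prod]
  exact (integrable_indicator_iff hs_meas).2 (FF_intOn z hz u v)

lemma FF_fubini (z : ℂ) (hz : 0 < z.im) (u v : SchwartzMap ℝ ℂ) :
    ∫ p in {p : ℝ × ℝ | p.1 < p.2}, FF z u v p =
      ∫ y, u y * ∫ x : ℝ in Iio y, Complex.exp (2 * Complex.I * z * ((y : ℂ) - (x : ℂ))) * v x := by
  rw [← integral_indicator hs_meas, MeasureTheory.Measure.volume_eq_prod,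
    integral_prod_symm _ (FF_ind_int z hz u v)]
  congr 1
  funext y
  exact inner_point z u v y

lemma FF_partial_int (z : ℂ) (hz : 0 < z.im) (u v : SchwartzMap ℝ ℂ) :
    Integrable (fun y => u y *
      ∫ x : ℝ in Iio y, Complex.exp (2 * Complex.I * z * ((y : ℂ) - (x : ℂ))) * v x) volume :=
  ((FF_ind_int z hz u v).integral_prod_right).congr (ae_of_all _ (inner_point z u v))

lemma int_e_mul (z : ℂ) (hz : 0 < z.im) (w : SchwartzMap ℝ ℂ) (y : ℝ) :
    IntegrableOn (fun x : ℝ => Complex.exp (2 * Complex.I * z * ((y : ℂ) - (x : ℂ))) * w x)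
      (Iic y) := by
  apply Integrable.mono' (w.integrable.norm.restrict)
  · apply Continuous.aestronglyMeasurable ?_ |>.restrict
    exact (Complex.continuous_exp.comp (by fun_prop)).mul w.continuous
  · rw [ae_restrict_iff' measurableSet_Iic]
    apply ae_of_all
    intro x hx
    simp only [Set.mem_Iic] at hx
    rw [norm_mul]
    have h1 : ((y : ℂ) - (x : ℂ)) = ((y - x : ℝ) : ℂ) := by push_cast; ring
    rw [h1]
    calc ‖Complex.exp _‖ * ‖w x‖ ≤ 1 * ‖w x‖ :=
          mul_le_mul_of_nonneg_right (exp_norm_le_one z hz _ (by linarith)) (norm_nonneg _)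
      _ = ‖w x‖ := one_mul _

lemma ftc_step (z : ℂ) (hz : 0 < z.im) (v : SchwartzMap ℝ ℂ) (y : ℝ) :
    ∫ x : ℝ in Iio y,
        Complex.exp (2 * Complex.I * z * ((y : ℂ) - (x : ℂ))) * (SchwartzMap.derivCLM ℝ ℂ v) x =
      v y + 2 * Complex.I * z *
        ∫ x : ℝ in Iio y, Complex.exp (2 * Complex.I * z * ((y : ℂ) - (x : ℂ))) * v x := by
  set c := 2 * Complex.I * z with hc
  have hd : ∀ x ∈ Iic y, HasDerivAt (fun t : ℝ => Complex.exp (c * ((y : ℂ) - (t : ℂ))) * v t)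
      ((-c) * (Complex.exp (c * ((y : ℂ) - (x : ℂ))) * v x) +
        Complex.exp (c * ((y : ℂ) - (x : ℂ))) * (SchwartzMap.derivCLM ℝ ℂ v) x) x := by
    intro x _
    have h0 : HasDerivAt (fun t : ℝ => (t : ℂ)) 1 x := by
      exact (hasDerivAt_id x).ofReal_comp
    have h1 : HasDerivAt (fun t : ℝ => c * ((y : ℂ) - (t : ℂ))) (-c) x := by
      simpa using (h0.const_sub (y : ℂ)).const_mul c
    have h3 := h1.cexp.mul (v.differentiable.differentiableAt.hasDerivAt)
    refine h3.congr_deriv ?_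
    rw [SchwartzMap.derivCLM_apply]
    ring
  have f'int : IntegrableOn (fun x : ℝ =>
      (-c) * (Complex.exp (c * ((y : ℂ) - (x : ℂ))) * v x) +
        Complex.exp (c * ((y : ℂ) - (x : ℂ))) * (SchwartzMap.derivCLM ℝ ℂ v) x) (Iic y) :=
    ((int_e_mul z hz v y).const_mul (-c)).add (int_e_mul z hz (SchwartzMap.derivCLM ℝ ℂ v) y)
  have htend : Tendsto (fun x : ℝ => Complex.exp (c * ((y : ℂ) - (x : ℂ))) * v x) atBot (𝓝 0) := by
    rw [tendsto_zero_iff_norm_tendsto_zero]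
    set M := (SchwartzMap.seminorm ℝ 0 0) v with hM
    have hbound : ∀ x : ℝ, ‖Complex.exp (c * ((y : ℂ) - (x : ℂ))) * v x‖ ≤
        Real.exp (2 * z.im * x - 2 * z.im * y) * M := by
      intro x
      rw [norm_mul]
      have h1 : ((y : ℂ) - (x : ℂ)) = ((y - x : ℝ) : ℂ) := by push_cast; ring
      rw [h1, hc, exp_norm]
      have h4 : -2 * z.im * (y - x) = 2 * z.im * x - 2 * z.im * y := by ring
      rw [h4]
      exact mul_le_mul_of_nonneg_left (v.norm_le_seminorm ℝ x) (Real.exp_nonneg _)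
    have h5 : Tendsto (fun x : ℝ => 2 * z.im * x - 2 * z.im * y) atBot atBot := by
      have h6 : Tendsto (fun x : ℝ => 2 * z.im * x) atBot atBot :=
        (tendsto_id (α := ℝ)).const_mul_atBot (by positivity)
      simpa [sub_eq_add_neg] using tendsto_atBot_add_const_right atBot (-(2 * z.im * y)) h6
    have hlim : Tendsto (fun x : ℝ => Real.exp (2 * z.im * x - 2 * z.im * y) * M) atBot (𝓝 0) := by
      simpa using ((Real.tendsto_exp_atBot.comp h5).mul_const M)
    exact squeeze_zero (fun x => norm_nonneg _) hbound hlim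
  have key := integral_Iic_of_hasDerivAt_of_tendsto' hd f'int htend
  rw [integral_Iic_eq_integral_Iio,
    integral_add
      (IntegrableOn.mono_set ((int_e_mul z hz v y).const_mul (-c)) Iio_subset_Iic_self)
      (IntegrableOn.mono_set (int_e_mul z hz (SchwartzMap.derivCLM ℝ ℂ v) y) Iio_subset_Iic_self),
    integral_const_mul] at key
  simp only [sub_self, mul_zero, Complex.exp_zero, one_mul, sub_zero] at key
  linear_combination key

theorem stmt_14 (z : ℂ) (hz : 0 < z.im) (g h : SchwartzMap ℝ ℂ) :
    ∫ p in {p : ℝ × ℝ | p.1 < p.2},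
        Complex.exp (2 * Complex.I * z * ((p.2 : ℂ) - (p.1 : ℂ))) * g p.2 * h p.1 =
      Complex.I / (2 * z) *
        ((∫ x : ℝ, g x * h x) -
          ∫ p in {p : ℝ × ℝ | p.1 < p.2},
            Complex.exp (2 * Complex.I * z * ((p.2 : ℂ) - (p.1 : ℂ))) * g p.2 *
              deriv (⇑h) p.1) := by
  have hderiv_eq : deriv (⇑h) = ⇑(SchwartzMap.derivCLM ℝ ℂ h) := by
    funext x; exact (SchwartzMap.derivCLM_apply (𝕜 := ℝ) (F := ℂ) h x).symm
  rw [hderiv_eq]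
  show ∫ p in {p : ℝ × ℝ | p.1 < p.2}, FF z g h p =
      Complex.I / (2 * z) * ((∫ x : ℝ, g x * h x) -
        ∫ p in {p : ℝ × ℝ | p.1 < p.2}, FF z g (SchwartzMap.derivCLM ℝ ℂ h) p)
  have Igh : Integrable (fun y : ℝ => g y * h y) volume := by
    apply h.integrable.bdd_mul g.continuous.aestronglyMeasurable
    exact ae_of_all _ (fun x => g.norm_le_seminorm ℝ x)
  have key : (∫ y : ℝ, g y * ∫ x : ℝ in Iio y,
        Complex.exp (2 * Complex.I * z * ((y : ℂ) - (x : ℂ))) * (SchwartzMap.derivCLM ℝ ℂ h) x) =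
      (∫ x : ℝ, g x * h x) + 2 * Complex.I * z *
        ∫ y : ℝ, g y * ∫ x : ℝ in Iio y,
          Complex.exp (2 * Complex.I * z * ((y : ℂ) - (x : ℂ))) * h x := by
    have e1 : ∀ y : ℝ, g y * (∫ x : ℝ in Iio y,
          Complex.exp (2 * Complex.I * z * ((y : ℂ) - (x : ℂ))) * (SchwartzMap.derivCLM ℝ ℂ h) x) =
        g y * h y + 2 * Complex.I * z * (g y * ∫ x : ℝ in Iio y,
          Complex.exp (2 * Complex.I * z * ((y : ℂ) - (x : ℂ))) * h x) := by
      intro y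
      rw [ftc_step z hz h y]
      ring
    rw [integral_congr_ae (ae_of_all _ e1),
      integral_add Igh ((FF_partial_int z hz g h).const_mul (2 * Complex.I * z)),
      integral_const_mul]
  rw [FF_fubini z hz g h, FF_fubini z hz g (SchwartzMap.derivCLM ℝ ℂ h), key]
  have hz0 : z ≠ 0 := fun h0 => by simp [h0] at hz
  set A := ∫ y : ℝ, g y * ∫ x : ℝ in Iio y,
    Complex.exp (2 * Complex.I * z * ((y : ℂ) - (x : ℂ))) * h x
  set C := ∫ x : ℝ, g x * h x
  rw [sub_add_cancel_left]
  field_simp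
  linear_combination A * Complex.I_sq
end
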